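/- For every integer n ≥ 2, the n-qubit GHZ state |ghz_n⟩ = (|0⟩^{⊗n} + |1⟩^{⊗n})/√2 attains the maximal quantum value of the ideal Mermin witness: ⟨ghz_n| M⁽ⁿ⁾ |ghz_n⟩ = 2^{n−1}, where M⁽ⁿ⁾ is the Mermin operator built from A₀⁽ʲ⁾ = X and A₁⁽ʲ⁾ = Y for every party j. -/

import Mathlib

open Matrix Complex
open scoped ComplexOrder

noncomputable section

/-- 2×2 complex matrices (single-qubit operators). -/
abbrev QubitMat := Matrix (Fin 2) (Fin 2) ℂ

def PauliX : QubitMat := !![0, 1; 1, 0]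
def PauliY : QubitMat := !![0, -Complex.I; Complex.I, 0]
def PauliZ : QubitMat := !![1, 0; 0, -1]

/-- Operators on (ℂ²)^{⊗n}, with the tensor factors indexed by `Fin n`
    (the entry indices are functions `Fin n → Fin 2`). -/
abbrev NMat (n : ℕ) := Matrix (Fin n → Fin 2) (Fin n → Fin 2) ℂ

/-- The 2×2 matrix `A` acting on the `j`-th tensor factor of (ℂ²)^{⊗n},
    padded with the identity on all other factors (Kronecker product). -/
def pad (n : ℕ) (j : Fin n) (A : QubitMat) : NMat n :=
  fun f g => A (f j) (g j) * ∏ i ∈ Finset.univ.erase j, (if f i = g i then (1 : ℂ) else 0)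

/-- The Mermin recursion `M_k, N_k` for the block of parties `a, a+1, …, a+k−1`
    (0-based), with `M_0 = 1, N_0 = 0`; so `M_1 = A₀⁽ᵃ⁾`, `N_1 = A₁⁽ᵃ⁾`, and
    `M_k = M_{k−1}A₀ − N_{k−1}A₁`, `N_k = M_{k−1}A₁ + N_{k−1}A₀`. -/
def blockPair {n : ℕ} (A : Fin n → Fin 2 → QubitMat) (a : ℕ) : ℕ → NMat n × NMat n
  | 0 => (1, 0)
  | k + 1 =>
    let P := blockPair A a k
    if h : a + k < n then
      (P.1 * pad n ⟨a + k, h⟩ (A ⟨a + k, h⟩ 0) - P.2 * pad n ⟨a + k, h⟩ (A ⟨a + k, h⟩ 1),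
        P.1 * pad n ⟨a + k, h⟩ (A ⟨a + k, h⟩ 1) + P.2 * pad n ⟨a + k, h⟩ (A ⟨a + k, h⟩ 0))
    else P

/-- The Mermin operator `M_n` built from the observables `A j 0`, `A j 1`. -/
def merminM {n : ℕ} (A : Fin n → Fin 2 → QubitMat) : NMat n := (blockPair A 0 n).1

/-- The companion operator `N_n`. -/
def merminN {n : ℕ} (A : Fin n → Fin 2 → QubitMat) : NMat n := (blockPair A 0 n).2

/-- A dichotomic qubit observable: Hermitian with `A² = I`. -/
def IsDichotomic (A : QubitMat) : Prop := A.IsHermitian ∧ A * A = 1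

/-- A quantum state: positive semidefinite with unit trace. -/
def IsState {n : ℕ} (ρ : NMat n) : Prop := ρ.PosSemidef ∧ ρ.trace = 1

/-- The rank-one projector |ψ⟩⟨ψ| associated to a vector ψ. -/
def pureMat {n : ℕ} (ψ : (Fin n → Fin 2) → ℂ) : NMat n := Matrix.vecMulVec ψ (star ψ)

def IsUnitVec {n : ℕ} (ψ : (Fin n → Fin 2) → ℂ) : Prop := ∑ f, Complex.normSq (ψ f) = 1

/-- A pure state is biseparable if it is a product across some nontrivial
    bipartition S | Sᶜ of the parties. -/
def PureBisep {n : ℕ} (ψ : (Fin n → Fin 2) → ℂ) : Prop :=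
  ∃ S : Finset (Fin n), S.Nonempty ∧ S ≠ Finset.univ ∧
    ∃ (φ : ({i : Fin n // i ∈ S} → Fin 2) → ℂ) (χ : ({i : Fin n // i ∉ S} → Fin 2) → ℂ),
      ∀ f, ψ f = φ (fun i => f i.1) * χ (fun i => f i.1)

/-- A mixed state is biseparable if it is a convex combination of pure
    biseparable states. -/
def IsBiseparable {n : ℕ} (ρ : NMat n) : Prop :=
  ∃ (m : ℕ) (w : Fin m → ℝ) (ψ : Fin m → ((Fin n → Fin 2) → ℂ)),
    (∀ i, 0 ≤ w i) ∧ (∑ i, w i = 1) ∧ (∀ i, IsUnitVec (ψ i)) ∧ (∀ i, PureBisep (ψ i)) ∧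
    ρ = ∑ i, (w i : ℂ) • pureMat (ψ i)

/-- The expectation value ⟨ψ|M|ψ⟩. -/
def expectVal {n : ℕ} (ψ : (Fin n → Fin 2) → ℂ) (M : NMat n) : ℂ :=
  star ψ ⬝ᵥ (M *ᵥ ψ)

/-- The n-qubit GHZ state (|0⟩^{⊗n} + |1⟩^{⊗n})/√2 as a vector in (ℂ²)^{⊗n}. -/
def ghz (n : ℕ) : (Fin n → Fin 2) → ℂ := fun f =>
  ((if ∀ j, f j = 0 then (1 : ℂ) else 0) + (if ∀ j, f j = 1 then (1 : ℂ) else 0))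
    / ((Real.sqrt 2 : ℝ) : ℂ)

lemma blockPair_succ {n : ℕ} (A : Fin n → Fin 2 → QubitMat) (a k : ℕ) (h : a + k < n) :
    blockPair A a (k+1) =
      ((blockPair A a k).1 * pad n ⟨a + k, h⟩ (A ⟨a + k, h⟩ 0)
          - (blockPair A a k).2 * pad n ⟨a + k, h⟩ (A ⟨a + k, h⟩ 1),
        (blockPair A a k).1 * pad n ⟨a + k, h⟩ (A ⟨a + k, h⟩ 1)
          + (blockPair A a k).2 * pad n ⟨a + k, h⟩ (A ⟨a + k, h⟩ 0)) := by
  rw [blockPair]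
  simp [h]

lemma blockPair_zero {n : ℕ} (A : Fin n → Fin 2 → QubitMat) (a : ℕ) :
    blockPair A a 0 = (1, 0) := rfl

lemma pauliX_apply (a b : Fin 2) :
    PauliX a b = (if a = 0 ∧ b = 1 then (1:ℂ) else 0) + (if a = 1 ∧ b = 0 then (1:ℂ) else 0) := by
  fin_cases a <;> fin_cases b <;> simp [PauliX]

lemma pauliY_apply (a b : Fin 2) :
    PauliY a b = Complex.I * (if a = 1 ∧ b = 0 then (1:ℂ) else 0)
      - Complex.I * (if a = 0 ∧ b = 1 then (1:ℂ) else 0) := by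
  fin_cases a <;> fin_cases b <;> simp [PauliY]

open scoped Classical in
lemma pad_apply {n : ℕ} (j : Fin n) (A : QubitMat) (f g : Fin n → Fin 2) :
    pad n j A f g = A (f j) (g j) * (if ∀ i, i ≠ j → f i = g i then 1 else 0) := by
  rw [pad, Finset.prod_boole]
  have hiff : (∀ i ∈ Finset.univ.erase j, f i = g i) ↔ (∀ i, i ≠ j → f i = g i) := by
    simp [Finset.mem_erase]
  simp only [hiff]

lemma mul_pad {n : ℕ} (M : NMat n) (j : Fin n) (B : QubitMat) (f g : Fin n → Fin 2) :
    (M * pad n j B) f g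
      = M f (Function.update g j 0) * B 0 (g j) + M f (Function.update g j 1) * B 1 (g j) := by
  classical
  rw [Matrix.mul_apply]
  have key : ∀ h : Fin n → Fin 2, M f h * pad n j B h g
      = if (∀ i, i ≠ j → h i = g i) then M f h * B (h j) (g j) else 0 := by
    intro h
    rw [pad_apply]
    split_ifs <;> ring
  rw [Finset.sum_congr rfl (fun h _ => key h)]
  have hne : Function.update g j 0 ≠ Function.update g j 1 := by
    intro hEq
    have := congrFun hEq j
    simp at this
  have hupd : ∀ (b : Fin 2) (i : Fin n), i ≠ j → Function.update g j b i = g i := by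
    intro b i hi; simp [Function.update_of_ne hi]
  rw [Finset.sum_eq_add (Function.update g j 0) (Function.update g j 1) hne
    (fun h _ hh => by
      rw [if_neg]
      intro hcond
      have hh2 : h = Function.update g j (h j) := by
        funext i
        by_cases hi : i = j
        · subst hi; simp
        · simp [Function.update_of_ne hi, hcond i hi]
      have : h j = 0 ∨ h j = 1 := by omega
      rcases this with h1 | h1 <;> rw [h1] at hh2
      · exact hh.1 hh2
      · exact hh.2 hh2)
    (by simp) (by simp)]
  rw [if_pos (hupd 0), if_pos (hupd 1)]
  simp

def c0 {n : ℕ} (k : ℕ) (f g : Fin n → Fin 2) : Prop :=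
  ∀ j : Fin n, ((j : ℕ) < k → f j = 0 ∧ g j = 1) ∧ (k ≤ (j : ℕ) → f j = g j)

def c1 {n : ℕ} (k : ℕ) (f g : Fin n → Fin 2) : Prop :=
  ∀ j : Fin n, ((j : ℕ) < k → f j = 1 ∧ g j = 0) ∧ (k ≤ (j : ℕ) → f j = g j)

instance {n k : ℕ} {f g : Fin n → Fin 2} : Decidable (c0 k f g) := by
  unfold c0; infer_instance

instance {n k : ℕ} {f g : Fin n → Fin 2} : Decidable (c1 k f g) := by
  unfold c1; infer_instance

lemma boole_mul_boole (P Q : Prop) [Decidable P] [Decidable Q] :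
    (if P then (1:ℂ) else 0) * (if Q then (1:ℂ) else 0) = if P ∧ Q then 1 else 0 := by
  by_cases hP : P <;> by_cases hQ : Q <;> simp [hP, hQ]

lemma key {n : ℕ} (A : Fin n → Fin 2 → QubitMat)
    (hA : ∀ j : Fin n, A j 0 = PauliX ∧ A j 1 = PauliY) :
    ∀ k, 1 ≤ k → k ≤ n → ∀ f g : Fin n → Fin 2,
      (blockPair A 0 k).1 f g
        = 2 ^ (k - 1) * ((if c0 k f g then (1:ℂ) else 0) + (if c1 k f g then (1:ℂ) else 0)) ∧
      (blockPair A 0 k).2 f g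
        = 2 ^ (k - 1) * (Complex.I * (if c1 k f g then (1:ℂ) else 0)
            - Complex.I * (if c0 k f g then (1:ℂ) else 0)) := by
  intro k hk1
  induction k, hk1 using Nat.le_induction with
  | base =>
    intro hkn f g
    have h0 : (0:ℕ) + 0 < n := by omega
    set j0 : Fin n := ⟨0, by omega⟩ with hj0
    have hiff0 : c0 (n := n) 1 f g ↔ (f j0 = 0 ∧ g j0 = 1) ∧ (∀ i, i ≠ j0 → f i = g i) := by
      constructor
      · intro h
        refine ⟨(h j0).1 (by simp [hj0]), fun i hi => (h i).2 ?_⟩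
        have : (i : ℕ) ≠ 0 := fun hc => hi (Fin.ext (by simp [hj0, hc]))
        omega
      · rintro ⟨h1, h2⟩ j
        constructor
        · intro hj
          have : j = j0 := Fin.ext (by simp [hj0]; omega)
          rw [this]; exact h1
        · intro hj
          refine h2 j (fun hc => ?_)
          rw [hc] at hj; simp [hj0] at hj
    have hiff1 : c1 (n := n) 1 f g ↔ (f j0 = 1 ∧ g j0 = 0) ∧ (∀ i, i ≠ j0 → f i = g i) := by
      constructor
      · intro h
        refine ⟨(h j0).1 (by simp [hj0]), fun i hi => (h i).2 ?_⟩
        have : (i : ℕ) ≠ 0 := fun hc => hi (Fin.ext (by simp [hj0, hc]))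
        omega
      · rintro ⟨h1, h2⟩ j
        constructor
        · intro hj
          have : j = j0 := Fin.ext (by simp [hj0]; omega)
          rw [this]; exact h1
        · intro hj
          refine h2 j (fun hc => ?_)
          rw [hc] at hj; simp [hj0] at hj
    rw [blockPair_succ A 0 0 h0, blockPair_zero]
    constructor
    · show (1 * pad n j0 (A j0 0) - 0 * pad n j0 (A j0 1)) f g = _
      rw [one_mul, zero_mul, sub_zero, (hA j0).1, pad_apply, pauliX_apply]
      rw [add_mul, boole_mul_boole, boole_mul_boole]
      norm_num [hiff0, hiff1]
    · show (1 * pad n j0 (A j0 1) + 0 * pad n j0 (A j0 0)) f g = _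
      rw [one_mul, zero_mul, add_zero, (hA j0).2, pad_apply, pauliY_apply]
      rw [sub_mul, mul_assoc, mul_assoc, boole_mul_boole, boole_mul_boole]
      norm_num [hiff0, hiff1]
  | succ k hk ih =>
    intro hkn f g
    have hkn' : k ≤ n := by omega
    have h0 : (0:ℕ) + k < n := by omega
    set jk : Fin n := ⟨k, by omega⟩ with hjk
    set u0 : Fin n → Fin 2 := Function.update g jk 0 with hu0
    set u1 : Fin n → Fin 2 := Function.update g jk 1 with hu1
    have hupd0 : ∀ i : Fin n, i ≠ jk → u0 i = g i := fun i hi => Function.update_of_ne hi _ _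
    have hupd1 : ∀ i : Fin n, i ≠ jk → u1 i = g i := fun i hi => Function.update_of_ne hi _ _
    have hne : ∀ j : Fin n, (j : ℕ) ≠ k → j ≠ jk := by
      intro j hj hc; rw [hc] at hj; simp [hjk] at hj
    have ihM0 := (ih hkn' f u0).1
    have ihN0 := (ih hkn' f u0).2
    have ihM1 := (ih hkn' f u1).1
    have ihN1 := (ih hkn' f u1).2
    rw [blockPair_succ A 0 k h0]
    have hjkeq : (⟨0 + k, h0⟩ : Fin n) = jk := by simp [hjk]
    rw [hjkeq] at *
    have hpow : (2:ℂ) ^ (k + 1 - 1) = 2 * 2 ^ (k - 1) := by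
      rw [Nat.add_sub_cancel]
      conv_lhs => rw [show k = (k-1)+1 by omega]
      rw [pow_succ]; ring
    have hI := Complex.I_mul_I
    rcases (show g jk = 0 ∨ g jk = 1 by omega) with hg | hg
    · -- g jk = 0 case
      have hc0 : ¬ c0 (k+1) f g := by
        intro h
        have := ((h jk).1 (by simp [hjk])).2
        rw [hg] at this; exact absurd this (by decide)
      have hc1 : c1 (k+1) f g ↔ c1 k f u1 := by
        constructor
        · intro h j
          constructor
          · intro hj
            have hjne : j ≠ jk := hne j (by omega)
            rw [hupd1 j hjne]
            exact (h j).1 (by omega)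
          · intro hj
            by_cases hjc : j = jk
            · rw [hjc, hu1, Function.update_self]
              exact ((h jk).1 (by simp [hjk])).1
            · rw [hupd1 j hjc]
              have : (j:ℕ) ≠ k := fun hc => hjc (Fin.ext (by simp [hjk, hc]))
              exact (h j).2 (by omega)
        · intro h j
          constructor
          · intro hj
            by_cases hjc : j = jk
            · rw [hjc, hg]
              have := (h jk).2 (by simp [hjk])
              rw [hu1, Function.update_self] at this
              exact ⟨this, rfl⟩
            · have : (j:ℕ) ≠ k := fun hc => hjc (Fin.ext (by simp [hjk, hc]))
              have h2 := (h j).1 (by omega)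
              rwa [hupd1 j hjc] at h2
          · intro hj
            have hjne : j ≠ jk := hne j (by omega)
            have := (h j).2 (by omega)
            rwa [hupd1 j hjne] at this
      constructor
      · show ((blockPair A 0 k).1 * pad n jk (A jk 0)
            - (blockPair A 0 k).2 * pad n jk (A jk 1)) f g = _
        rw [Matrix.sub_apply, (hA jk).1, (hA jk).2, mul_pad, mul_pad, hg]
        rw [show PauliX 0 0 = 0 by simp [PauliX], show PauliX 1 0 = 1 by simp [PauliX],
          show PauliY 0 0 = 0 by simp [PauliY], show PauliY 1 0 = Complex.I by simp [PauliY]]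
        rw [ihM1, ihN1]
        rw [if_neg hc0]; simp only [hc1]
        rw [hpow]
        set a := (if c0 k f u1 then (1:ℂ) else 0)
        set b := (if c1 k f u1 then (1:ℂ) else 0)
        linear_combination (2:ℂ) ^ (k-1) * (a - b) * hI
      · show ((blockPair A 0 k).1 * pad n jk (A jk 1)
            + (blockPair A 0 k).2 * pad n jk (A jk 0)) f g = _
        rw [Matrix.add_apply, (hA jk).1, (hA jk).2, mul_pad, mul_pad, hg]
        rw [show PauliX 0 0 = 0 by simp [PauliX], show PauliX 1 0 = 1 by simp [PauliX],
          show PauliY 0 0 = 0 by simp [PauliY], show PauliY 1 0 = Complex.I by simp [PauliY]]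
        rw [ihM1, ihN1]
        rw [if_neg hc0]; simp only [hc1]
        rw [hpow]
        ring
    · -- g jk = 1 case
      have hc1' : ¬ c1 (k+1) f g := by
        intro h
        have := ((h jk).1 (by simp [hjk])).2
        rw [hg] at this; exact absurd this (by decide)
      have hc0' : c0 (k+1) f g ↔ c0 k f u0 := by
        constructor
        · intro h j
          constructor
          · intro hj
            have hjne : j ≠ jk := hne j (by omega)
            rw [hupd0 j hjne]
            exact (h j).1 (by omega)
          · intro hj
            by_cases hjc : j = jk
            · rw [hjc, hu0, Function.update_self]
              exact ((h jk).1 (by simp [hjk])).1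
            · rw [hupd0 j hjc]
              have : (j:ℕ) ≠ k := fun hc => hjc (Fin.ext (by simp [hjk, hc]))
              exact (h j).2 (by omega)
        · intro h j
          constructor
          · intro hj
            by_cases hjc : j = jk
            · rw [hjc, hg]
              have := (h jk).2 (by simp [hjk])
              rw [hu0, Function.update_self] at this
              exact ⟨this, rfl⟩
            · have : (j:ℕ) ≠ k := fun hc => hjc (Fin.ext (by simp [hjk, hc]))
              have h2 := (h j).1 (by omega)
              rwa [hupd0 j hjc] at h2
          · intro hj
            have hjne : j ≠ jk := hne j (by omega)
            have := (h j).2 (by omega)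
            rwa [hupd0 j hjne] at this
      constructor
      · show ((blockPair A 0 k).1 * pad n jk (A jk 0)
            - (blockPair A 0 k).2 * pad n jk (A jk 1)) f g = _
        rw [Matrix.sub_apply, (hA jk).1, (hA jk).2, mul_pad, mul_pad, hg]
        rw [show PauliX 0 1 = 1 by simp [PauliX], show PauliX 1 1 = 0 by simp [PauliX],
          show PauliY 0 1 = -Complex.I by simp [PauliY], show PauliY 1 1 = 0 by simp [PauliY]]
        rw [ihM0, ihN0]
        rw [if_neg hc1']; simp only [hc0']
        rw [hpow]
        set a := (if c0 k f u0 then (1:ℂ) else 0)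
        set b := (if c1 k f u0 then (1:ℂ) else 0)
        linear_combination (2:ℂ) ^ (k-1) * (b - a) * hI
      · show ((blockPair A 0 k).1 * pad n jk (A jk 1)
            + (blockPair A 0 k).2 * pad n jk (A jk 0)) f g = _
        rw [Matrix.add_apply, (hA jk).1, (hA jk).2, mul_pad, mul_pad, hg]
        rw [show PauliX 0 1 = 1 by simp [PauliX], show PauliX 1 1 = 0 by simp [PauliX],
          show PauliY 0 1 = -Complex.I by simp [PauliY], show PauliY 1 1 = 0 by simp [PauliY]]
        rw [ihM0, ihN0]
        rw [if_neg hc1']; simp only [hc0']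
        rw [hpow]
        ring

/-- the GHZ state attains the maximal quantum value 2^{n−1} of the
    ideal Mermin witness (A₀⁽ʲ⁾ = X, A₁⁽ʲ⁾ = Y for every party j). -/
theorem ghz_mermin_value
    (n : ℕ) (hn : 2 ≤ n)
    (A : Fin n → Fin 2 → QubitMat)
    (hA : ∀ j : Fin n, A j 0 = PauliX ∧ A j 1 = PauliY) :
    expectVal (ghz n) (merminM A) = (((2 : ℝ) ^ (n - 1) : ℝ) : ℂ) := by
  classical
  set z : Fin n → Fin 2 := fun _ => 0 with hz
  set o : Fin n → Fin 2 := fun _ => 1 with ho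
  have hM : ∀ f g, merminM A f g
      = 2 ^ (n - 1) * ((if f = z then (1:ℂ) else 0) * (if g = o then (1:ℂ) else 0)
        + (if f = o then (1:ℂ) else 0) * (if g = z then (1:ℂ) else 0)) := by
    intro f g
    have h := (key A hA n (by omega) le_rfl f g).1
    have hC0 : c0 (n := n) n f g ↔ (f = z ∧ g = o) := by
      constructor
      · intro h'
        constructor
        · funext j; exact ((h' j).1 j.isLt).1
        · funext j; exact ((h' j).1 j.isLt).2
      · rintro ⟨h1, h2⟩ j
        exact ⟨fun _ => ⟨by rw [h1], by rw [h2]⟩,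
          fun hj => absurd j.isLt (by omega)⟩
    have hC1 : c1 (n := n) n f g ↔ (f = o ∧ g = z) := by
      constructor
      · intro h'
        constructor
        · funext j; exact ((h' j).1 j.isLt).1
        · funext j; exact ((h' j).1 j.isLt).2
      · rintro ⟨h1, h2⟩ j
        exact ⟨fun _ => ⟨by rw [h1], by rw [h2]⟩,
          fun hj => absurd j.isLt (by omega)⟩
    rw [merminM, h]
    simp only [hC0, hC1]
    rw [boole_mul_boole, boole_mul_boole]
  have honz : o ≠ z := by
    intro hcon
    have := congrFun hcon ⟨0, by omega⟩
    simp [hz, ho] at this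
  have hz1 : ¬ ∀ j : Fin n, z j = 1 := by
    intro hcon
    have := hcon ⟨0, by omega⟩
    simp [hz] at this
  have ho0 : ¬ ∀ j : Fin n, o j = 0 := by
    intro hcon
    have := hcon ⟨0, by omega⟩
    simp [ho] at this
  have hghz_z : ghz n z = 1 / ((Real.sqrt 2 : ℝ) : ℂ) := by
    rw [ghz]
    rw [if_pos (fun j => rfl), if_neg hz1]
    norm_num
  have hghz_o : ghz n o = 1 / ((Real.sqrt 2 : ℝ) : ℂ) := by
    rw [ghz]
    rw [if_neg ho0, if_pos (fun j => rfl)]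
    norm_num
  have hmv : ∀ f, (merminM A *ᵥ ghz n) f
      = 2 ^ (n - 1) * ((if f = z then (1:ℂ) else 0) * ghz n o
          + (if f = o then (1:ℂ) else 0) * ghz n z) := by
    intro f
    rw [Matrix.mulVec, dotProduct]
    have step : ∀ g : Fin n → Fin 2, merminM A f g * ghz n g
        = (2 ^ (n - 1) * (if f = z then (1:ℂ) else 0)) * (if g = o then ghz n g else 0)
          + (2 ^ (n - 1) * (if f = o then (1:ℂ) else 0)) * (if g = z then ghz n g else 0) := by
      intro g
      rw [hM]
      by_cases h2 : g = o
      · have h4 : ¬ g = z := by rw [h2]; exact honz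
        simp [h2, h4, honz, Ne.symm honz]; try ring
      · by_cases h4 : g = z <;> simp [h2, h4, honz, Ne.symm honz] <;> try ring
    rw [Finset.sum_congr rfl (fun g _ => step g), Finset.sum_add_distrib,
      ← Finset.mul_sum, ← Finset.mul_sum,
      Finset.sum_ite_eq' Finset.univ o (fun g => ghz n g),
      Finset.sum_ite_eq' Finset.univ z (fun g => ghz n g)]
    simp only [Finset.mem_univ, if_pos]
    ring
  rw [expectVal, dotProduct]
  have step2 : ∀ f : Fin n → Fin 2, star (ghz n) f * (merminM A *ᵥ ghz n) f
      = (2 ^ (n - 1) * ghz n o) * (if f = z then star (ghz n f) else 0)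
        + (2 ^ (n - 1) * ghz n z) * (if f = o then star (ghz n f) else 0) := by
    intro f
    rw [hmv, Pi.star_apply]
    by_cases h1 : f = z
    · have h3 : ¬ f = o := by rw [h1]; exact fun hc => honz hc.symm
      simp [h1, h3, honz, Ne.symm honz]; try ring
    · by_cases h3 : f = o <;> simp [h1, h3, honz, Ne.symm honz] <;> try ring
  rw [Finset.sum_congr rfl (fun f _ => step2 f), Finset.sum_add_distrib,
    ← Finset.mul_sum, ← Finset.mul_sum,
    Finset.sum_ite_eq' Finset.univ z (fun f => star (ghz n f)),
    Finset.sum_ite_eq' Finset.univ o (fun f => star (ghz n f))]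
  simp only [Finset.mem_univ, if_pos]
  rw [hghz_z, hghz_o]
  have hstar : star ((1:ℂ) / ((Real.sqrt 2 : ℝ) : ℂ)) = 1 / ((Real.sqrt 2 : ℝ) : ℂ) := by
    rw [star_div₀, star_one, Complex.star_def, Complex.conj_ofReal]
  rw [hstar]
  have hc2 : ((Real.sqrt 2 : ℝ) : ℂ) * ((Real.sqrt 2 : ℝ) : ℂ) = 2 := by
    rw [← Complex.ofReal_mul, Real.mul_self_sqrt (by norm_num)]
    norm_num
  have hcne : ((Real.sqrt 2 : ℝ) : ℂ) ≠ 0 := by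
    intro hcon
    rw [Complex.ofReal_eq_zero] at hcon
    have := Real.sqrt_pos.mpr (show (0:ℝ) < 2 by norm_num)
    linarith
  have hcast : (((2 : ℝ) ^ (n - 1) : ℝ) : ℂ) = (2:ℂ) ^ (n - 1) := by push_cast; ring
  rw [hcast]
  field_simp
  linear_combination -hc2
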